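/- Let 𝒜 be a finite alphabet and ℱ ⊆ 𝒜⁺ a set of forbidden factors. Suppose there exists a real β > 1 such that |𝒜| ≥ β + Σ_{f∈ℱ} β^{1−|f|}. Then for all n ≥ 0, |ℒ_n(𝒜,ℱ)| ≥ β^n; in particular the growth rate satisfies α(𝒜,ℱ) ≥ β. -/
import Mathlib


open Filter

/-- The set of words of length `n` over the alphabet `A` avoiding every
forbidden factor in `F` (no element of `F` occurs as a contiguous subword). -/
def langN {A : Type*} (F : Set (List A)) (n : ℕ) : Set (List A) :=
  {w | w.length = n ∧ ∀ f ∈ F, ¬ f <:+: w}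

section Aux

variable {A : Type*} [Fintype A] (F : Set (List A))

lemma langN_finite (n : ℕ) : (langN F n).Finite :=
  (List.finite_length_eq A n).subset fun _ hw => hw.1

omit [Fintype A] in
lemma langN_zero (hF : ∀ f ∈ F, f ≠ ([] : List A)) : langN F 0 = {([] : List A)} := by
  ext w
  constructor
  · rintro ⟨hl, -⟩
    exact List.length_eq_zero_iff.mp hl
  · rintro rfl
    exact ⟨rfl, fun f hf hinf => hF f hf (List.infix_nil.mp hinf)⟩

lemma langN_step (hF : ∀ f ∈ F, f ≠ ([] : List A)) (n : ℕ) (Ff : Finset (List A))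
    (hFf : ∀ f, f ∈ Ff ↔ f ∈ F ∧ f.length ≤ n + 1) :
    Fintype.card A * (langN F n).ncard ≤
      (langN F (n + 1)).ncard + ∑ f ∈ Ff, (langN F (n + 1 - f.length)).ncard := by
  classical
  set Lf : ℕ → Finset (List A) := fun m => (langN_finite F m).toFinset with hLfdef
  have hLmem : ∀ m w, w ∈ Lf m ↔ w ∈ langN F m := fun m w => Set.Finite.mem_toFinset _
  have hLcard : ∀ m, (langN F m).ncard = (Lf m).card := fun m =>
    Set.ncard_eq_toFinset_card _ (langN_finite F m)
  set E : Finset (List A) :=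
    (Lf n ×ˢ (Finset.univ : Finset A)).image (fun p => p.1 ++ [p.2]) with hEdef
  have hinj : Function.Injective (fun p : List A × A => p.1 ++ [p.2]) := by
    rintro ⟨w, a⟩ ⟨w', a'⟩ h
    simp only at h
    obtain ⟨h1, h2⟩ := List.append_inj' h rfl
    simp_all
  have hEcard : E.card = (Lf n).card * Fintype.card A := by
    rw [hEdef, Finset.card_image_of_injective _ hinj, Finset.card_product, Finset.card_univ]
  have hsub : E \ Lf (n + 1) ⊆
      Ff.biUnion (fun f => (Lf (n + 1 - f.length)).image (fun u => u ++ f)) := by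
    intro x hx
    obtain ⟨hxE, hxL⟩ := Finset.mem_sdiff.mp hx
    obtain ⟨⟨w, a⟩, hw, rfl⟩ := Finset.mem_image.mp hxE
    have hwL : w ∈ langN F n := (hLmem _ _).mp (Finset.mem_product.mp hw).1
    have hlen : (w ++ [a]).length = n + 1 := by simp [hwL.1]
    have hbad : ¬ ∀ f ∈ F, ¬ f <:+: (w ++ [a]) := by
      intro hall
      exact hxL ((hLmem _ _).mpr ⟨hlen, hall⟩)
    push_neg at hbad
    obtain ⟨f, hfF, hfinf⟩ := hbad
    obtain ⟨s, t, hst⟩ := hfinf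
    have ht : t = [] := by
      rcases List.eq_nil_or_concat t with rfl | ⟨t', b, rfl⟩
      · rfl
      · exfalso
        rw [List.concat_eq_append, ← List.append_assoc] at hst
        have hw' : s ++ f ++ t' = w := (List.append_inj' hst rfl).1
        exact hwL.2 f hfF ⟨s, t', hw'⟩
    subst ht
    rw [List.append_nil] at hst
    have hfne : f ≠ [] := hF f hfF
    have hflen1 : 1 ≤ f.length := List.length_pos_iff.mpr hfne
    have hlens : s.length + f.length = n + 1 := by
      have := congrArg List.length hst
      simpa [hwL.1] using this
    have hflen : f.length ≤ n + 1 := by omega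
    have hslen : s.length = n + 1 - f.length := by omega
    have hspref : s <+: w := by
      have h1 : s <+: w ++ [a] := ⟨f, hst⟩
      have h2 : w <+: w ++ [a] := ⟨[a], rfl⟩
      exact List.prefix_of_prefix_length_le h1 h2 (by rw [hwL.1]; omega)
    have hsL : s ∈ langN F (n + 1 - f.length) :=
      ⟨hslen, fun g hg hginf => hwL.2 g hg (hginf.trans hspref.isInfix)⟩
    exact Finset.mem_biUnion.mpr ⟨f, (hFf f).mpr ⟨hfF, hflen⟩,
      Finset.mem_image.mpr ⟨s, (hLmem _ _).mpr hsL, hst⟩⟩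
  have h1 : E.card ≤ (Lf (n + 1)).card + ∑ f ∈ Ff, (Lf (n + 1 - f.length)).card := by
    calc E.card ≤ ((E \ Lf (n + 1)) ∪ Lf (n + 1)).card := by
          apply Finset.card_le_card
          intro x hx
          by_cases h : x ∈ Lf (n + 1)
          · exact Finset.mem_union.mpr (Or.inr h)
          · exact Finset.mem_union.mpr (Or.inl (Finset.mem_sdiff.mpr ⟨hx, h⟩))
      _ ≤ (E \ Lf (n + 1)).card + (Lf (n + 1)).card := Finset.card_union_le _ _
      _ ≤ (Ff.biUnion (fun f => (Lf (n + 1 - f.length)).image (fun u => u ++ f))).card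
            + (Lf (n + 1)).card := by
          exact Nat.add_le_add_right (Finset.card_le_card hsub) _
      _ ≤ (∑ f ∈ Ff, ((Lf (n + 1 - f.length)).image (fun u => u ++ f)).card)
            + (Lf (n + 1)).card := Nat.add_le_add_right Finset.card_biUnion_le _
      _ ≤ (∑ f ∈ Ff, (Lf (n + 1 - f.length)).card) + (Lf (n + 1)).card := by
          refine Nat.add_le_add_right (Finset.sum_le_sum fun f _ => Finset.card_image_le) _
      _ = (Lf (n + 1)).card + ∑ f ∈ Ff, (Lf (n + 1 - f.length)).card := by ring
  calc Fintype.card A * (langN F n).ncard = E.card := by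
        rw [hLcard, hEcard]; ring
    _ ≤ (Lf (n + 1)).card + ∑ f ∈ Ff, (Lf (n + 1 - f.length)).card := h1
    _ = (langN F (n + 1)).ncard + ∑ f ∈ Ff, (langN F (n + 1 - f.length)).ncard := by
        rw [hLcard]
        congr 1
        exact Finset.sum_congr rfl fun f _ => (hLcard _).symm

lemma langN_growth (hF : ∀ f ∈ F, f ≠ ([] : List A)) (β : ℝ) (hβ : 1 < β)
    (hsum : Summable fun f : F => β ^ ((1 : ℤ) - ((f : List A).length : ℤ)))
    (hcond : β + ∑' f : F, β ^ ((1 : ℤ) - ((f : List A).length : ℤ)) ≤ (Fintype.card A : ℝ)) :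
    ∀ n : ℕ, β * ((langN F n).ncard : ℝ) ≤ ((langN F (n + 1)).ncard : ℝ) := by
  classical
  have hβ0 : (0 : ℝ) < β := lt_trans one_pos hβ
  intro n
  induction n using Nat.strong_induction_on with
  | _ n IH =>
    -- iterated growth from IH
    have hiter : ∀ k, k ≤ n →
        β ^ k * ((langN F (n - k)).ncard : ℝ) ≤ ((langN F n).ncard : ℝ) := by
      intro k
      induction k with
      | zero => intro _; simp
      | succ k ih =>
        intro hk
        have h1 : β * ((langN F (n - (k + 1))).ncard : ℝ)
            ≤ ((langN F (n - k)).ncard : ℝ) := by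
          have h := IH (n - (k + 1)) (by omega)
          have heq : n - (k + 1) + 1 = n - k := by omega
          rwa [heq] at h
        calc β ^ (k + 1) * ((langN F (n - (k + 1))).ncard : ℝ)
            = β ^ k * (β * ((langN F (n - (k + 1))).ncard : ℝ)) := by ring
          _ ≤ β ^ k * ((langN F (n - k)).ncard : ℝ) := by
              exact mul_le_mul_of_nonneg_left h1 (pow_nonneg hβ0.le k)
          _ ≤ ((langN F n).ncard : ℝ) := ih (by omega)
    -- the finite set of relevant forbidden factors
    have hFfin : ({f | f ∈ F ∧ f.length ≤ n + 1} : Set (List A)).Finite :=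
      (List.finite_length_le A (n + 1)).subset fun f hf => hf.2
    set Ff : Finset (List A) := hFfin.toFinset with hFfdef
    have hFfmem : ∀ f, f ∈ Ff ↔ f ∈ F ∧ f.length ≤ n + 1 := fun f =>
      Set.Finite.mem_toFinset _
    have hstep := langN_step F hF n Ff hFfmem
    -- pass to ℝ
    have hstepR : (Fintype.card A : ℝ) * ((langN F n).ncard : ℝ) ≤
        ((langN F (n + 1)).ncard : ℝ)
          + ∑ f ∈ Ff, ((langN F (n + 1 - f.length)).ncard : ℝ) := by
      have := (Nat.cast_le (α := ℝ)).mpr hstep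
      push_cast at this
      linarith
    -- each term bounded
    have hterm : ∀ f ∈ Ff, ((langN F (n + 1 - f.length)).ncard : ℝ) ≤
        β ^ ((1 : ℤ) - (f.length : ℤ)) * ((langN F n).ncard : ℝ) := by
      intro f hf
      obtain ⟨hfF, hflen⟩ := (hFfmem f).mp hf
      have hf1 : 1 ≤ f.length := List.length_pos_iff.mpr (hF f hfF)
      have hit := hiter (f.length - 1) (by omega)
      have heq : n - (f.length - 1) = n + 1 - f.length := by omega
      rw [heq] at hit
      have hzpow : β ^ ((1 : ℤ) - (f.length : ℤ)) * β ^ (f.length - 1) = 1 := by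
        rw [← zpow_natCast β (f.length - 1), ← zpow_add₀ (ne_of_gt hβ0)]
        have : (1 : ℤ) - (f.length : ℤ) + ((f.length - 1 : ℕ) : ℤ) = 0 := by
          push_cast [Nat.cast_sub hf1]
          ring
        rw [this, zpow_zero]
      have hpos : (0 : ℝ) < β ^ ((1 : ℤ) - (f.length : ℤ)) := zpow_pos hβ0 _
      have := mul_le_mul_of_nonneg_left hit hpos.le
      calc ((langN F (n + 1 - f.length)).ncard : ℝ)
          = (β ^ ((1 : ℤ) - (f.length : ℤ)) * β ^ (f.length - 1))
              * ((langN F (n + 1 - f.length)).ncard : ℝ) := by rw [hzpow]; ring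
        _ = β ^ ((1 : ℤ) - (f.length : ℤ))
              * (β ^ (f.length - 1) * ((langN F (n + 1 - f.length)).ncard : ℝ)) := by ring
        _ ≤ β ^ ((1 : ℤ) - (f.length : ℤ)) * ((langN F n).ncard : ℝ) := this
    -- sum of the zpow weights is at most the tsum
    have hsum_le : ∑ f ∈ Ff, β ^ ((1 : ℤ) - (f.length : ℤ)) ≤
        ∑' f : F, β ^ ((1 : ℤ) - ((f : List A).length : ℤ)) := by
      have hmem : ∀ x : {x // x ∈ Ff}, (x : List A) ∈ F := fun x =>
        ((hFfmem x.1).mp x.2).1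
      set s : Finset F := Ff.attach.map
        ⟨fun x => (⟨x.1, hmem x⟩ : F), by
          intro a b h
          simp only [Subtype.mk.injEq] at h
          exact Subtype.ext h⟩ with hs
      have heq : ∑ f ∈ Ff, β ^ ((1 : ℤ) - (f.length : ℤ))
          = ∑ x ∈ s, β ^ ((1 : ℤ) - ((x : List A).length : ℤ)) := by
        rw [hs, Finset.sum_map]
        exact (Finset.sum_attach _ _).symm
      rw [heq]
      exact Summable.sum_le_tsum s (fun f _ => (zpow_pos hβ0 _).le) hsum
    have hLn0 : (0 : ℝ) ≤ ((langN F n).ncard : ℝ) := Nat.cast_nonneg _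
    have hsumterm : ∑ f ∈ Ff, ((langN F (n + 1 - f.length)).ncard : ℝ) ≤
        (∑ f ∈ Ff, β ^ ((1 : ℤ) - (f.length : ℤ))) * ((langN F n).ncard : ℝ) := by
      rw [Finset.sum_mul]
      exact Finset.sum_le_sum hterm
    nlinarith [mul_le_mul_of_nonneg_right hcond hLn0,
      mul_le_mul_of_nonneg_right hsum_le hLn0]

end Aux

/-- If there is `β > 1` with `|𝒜| ≥ β + Σ_{f ∈ ℱ} β^(1-|f|)`, then
`|ℒ_n(𝒜,ℱ)| ≥ β^n` for all `n`; in particular, the growth rate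
`α(𝒜,ℱ) = lim_n |ℒ_n(𝒜,ℱ)|^(1/n)` satisfies `α(𝒜,ℱ) ≥ β`. -/
theorem stmt1 {A : Type*} [Fintype A] (F : Set (List A))
    (hF : ∀ f ∈ F, f ≠ ([] : List A)) (β : ℝ) (hβ : 1 < β)
    (hsum : Summable fun f : F => β ^ ((1 : ℤ) - ((f : List A).length : ℤ)))
    (hcond : β + ∑' f : F, β ^ ((1 : ℤ) - ((f : List A).length : ℤ)) ≤ (Fintype.card A : ℝ)) :
    (∀ n : ℕ, β ^ n ≤ ((langN F n).ncard : ℝ)) ∧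
    ∀ α : ℝ,
      Tendsto (fun n : ℕ => ((langN F n).ncard : ℝ) ^ (1 / (n : ℝ))) atTop (nhds α) →
      β ≤ α := by
  have hβ0 : (0 : ℝ) < β := lt_trans one_pos hβ
  have hgrow := langN_growth F hF β hβ hsum hcond
  have hmain : ∀ n : ℕ, β ^ n ≤ ((langN F n).ncard : ℝ) := by
    intro n
    induction n with
    | zero => simp [langN_zero F hF]
    | succ n ih =>
      calc β ^ (n + 1) = β * β ^ n := by ring
        _ ≤ β * ((langN F n).ncard : ℝ) := mul_le_mul_of_nonneg_left ih hβ0.le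
        _ ≤ ((langN F (n + 1)).ncard : ℝ) := hgrow n
  refine ⟨hmain, fun α hα => ?_⟩
  refine ge_of_tendsto hα ?_
  filter_upwards [eventually_ge_atTop 1] with n hn
  have hn0 : (n : ℝ) ≠ 0 := by positivity
  have h1 : β = (β ^ n) ^ (1 / (n : ℝ)) := by
    rw [← Real.rpow_natCast β n, ← Real.rpow_mul hβ0.le, mul_one_div,
      div_self hn0, Real.rpow_one]
  rw [h1]
  exact Real.rpow_le_rpow (pow_nonneg hβ0.le n) (hmain n) (by positivity)
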